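/- Let η₁ = α₁x + β₁y + γ₁ and η₂ = α₂x + β₂y + γ₂ with αᵢ² - βᵢ² = 4 (i = 1,2), set A = -(4 - α₁α₂ + β₁β₂)/(4 + α₁α₂ - β₁β₂) (assume denominator nonzero), F = exp(η₁) + exp(η₂) and G = 1 + A·exp(η₁ + η₂). Then the bilinear equations (D_x² - D_y² - 4)(F·G) = 0 and (D_x² - D_y²)(F·F + G·G) = 0 hold identically. -/

import Mathlib

private lemma hlinx (a b c x : ℝ) : HasDerivAt (fun t : ℝ => a * t + b + c) a x := by
  simpa using (((hasDerivAt_id x).const_mul a).add_const b).add_const c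

private lemma hliny (a b c x : ℝ) : HasDerivAt (fun t : ℝ => a + b * t + c) b x := by
  simpa using (((hasDerivAt_id x).const_mul b).const_add a).add_const c

private lemma derivFx (a1 p1 q1 a2 p2 q2 : ℝ) :
    deriv (fun t => Real.exp (a1*t+p1+q1) + Real.exp (a2*t+p2+q2))
      = fun t => a1 * Real.exp (a1*t+p1+q1) + a2 * Real.exp (a2*t+p2+q2) := by
  funext t
  erw [(((hlinx a1 p1 q1 t).exp).add ((hlinx a2 p2 q2 t).exp)).deriv]
  ring

private lemma derivFx2 (a1 p1 q1 a2 p2 q2 : ℝ) :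
    deriv (fun t => a1 * Real.exp (a1*t+p1+q1) + a2 * Real.exp (a2*t+p2+q2))
      = fun t => a1*a1 * Real.exp (a1*t+p1+q1) + a2*a2 * Real.exp (a2*t+p2+q2) := by
  funext t
  erw [((((hlinx a1 p1 q1 t).exp).const_mul a1).add
    (((hlinx a2 p2 q2 t).exp).const_mul a2)).deriv]
  ring

private lemma derivFy (p1 b1 q1 p2 b2 q2 : ℝ) :
    deriv (fun t => Real.exp (p1+b1*t+q1) + Real.exp (p2+b2*t+q2))
      = fun t => b1 * Real.exp (p1+b1*t+q1) + b2 * Real.exp (p2+b2*t+q2) := by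
  funext t
  erw [(((hliny p1 b1 q1 t).exp).add ((hliny p2 b2 q2 t).exp)).deriv]
  ring

private lemma derivFy2 (p1 b1 q1 p2 b2 q2 : ℝ) :
    deriv (fun t => b1 * Real.exp (p1+b1*t+q1) + b2 * Real.exp (p2+b2*t+q2))
      = fun t => b1*b1 * Real.exp (p1+b1*t+q1) + b2*b2 * Real.exp (p2+b2*t+q2) := by
  funext t
  erw [((((hliny p1 b1 q1 t).exp).const_mul b1).add
    (((hliny p2 b2 q2 t).exp).const_mul b2)).deriv]
  ring

private lemma derivGx (A a1 p1 q1 a2 p2 q2 : ℝ) :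
    deriv (fun t => 1 + A * Real.exp (a1*t+p1+q1 + (a2*t+p2+q2)))
      = fun t => A*(a1+a2) * Real.exp (a1*t+p1+q1 + (a2*t+p2+q2)) := by
  funext t
  erw [(((((hlinx a1 p1 q1 t).add (hlinx a2 p2 q2 t)).exp).const_mul A).const_add 1).deriv]
  simp only [Pi.add_apply]
  ring

private lemma derivGx2 (A a1 p1 q1 a2 p2 q2 : ℝ) :
    deriv (fun t => A*(a1+a2) * Real.exp (a1*t+p1+q1 + (a2*t+p2+q2)))
      = fun t => A*(a1+a2)*(a1+a2) * Real.exp (a1*t+p1+q1 + (a2*t+p2+q2)) := by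
  funext t
  erw [((((hlinx a1 p1 q1 t).add (hlinx a2 p2 q2 t)).exp).const_mul (A*(a1+a2))).deriv]
  simp only [Pi.add_apply]
  ring

private lemma derivGy (A p1 b1 q1 p2 b2 q2 : ℝ) :
    deriv (fun t => 1 + A * Real.exp (p1+b1*t+q1 + (p2+b2*t+q2)))
      = fun t => A*(b1+b2) * Real.exp (p1+b1*t+q1 + (p2+b2*t+q2)) := by
  funext t
  erw [(((((hliny p1 b1 q1 t).add (hliny p2 b2 q2 t)).exp).const_mul A).const_add 1).deriv]
  simp only [Pi.add_apply]
  ring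

private lemma derivGy2 (A p1 b1 q1 p2 b2 q2 : ℝ) :
    deriv (fun t => A*(b1+b2) * Real.exp (p1+b1*t+q1 + (p2+b2*t+q2)))
      = fun t => A*(b1+b2)*(b1+b2) * Real.exp (p1+b1*t+q1 + (p2+b2*t+q2)) := by
  funext t
  erw [((((hliny p1 b1 q1 t).add (hliny p2 b2 q2 t)).exp).const_mul (A*(b1+b2))).deriv]
  simp only [Pi.add_apply]
  ring

/-- Hirota operator `D_x²` for functions of two real variables. -/
noncomputable def Dx2 (f g : ℝ → ℝ → ℝ) : ℝ → ℝ → ℝ := fun x y =>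
  deriv (deriv (fun x' => f x' y)) x * g x y
    - 2 * deriv (fun x' => f x' y) x * deriv (fun x' => g x' y) x
    + f x y * deriv (deriv (fun x' => g x' y)) x

/-- Hirota operator `D_y²` for functions of two real variables. -/
noncomputable def Dy2 (f g : ℝ → ℝ → ℝ) : ℝ → ℝ → ℝ := fun x y =>
  deriv (deriv (fun y' => f x y')) y * g x y
    - 2 * deriv (fun y' => f x y') y * deriv (fun y' => g x y') y
    + f x y * deriv (deriv (fun y' => g x y')) y

theorem stmt_15 (α₁ β₁ γ₁ α₂ β₂ γ₂ : ℝ)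
    (h1 : α₁ ^ 2 - β₁ ^ 2 = 4) (h2 : α₂ ^ 2 - β₂ ^ 2 = 4)
    (hden : 4 + α₁ * α₂ - β₁ * β₂ ≠ 0)
    (A : ℝ) (hA : A = -(4 - α₁ * α₂ + β₁ * β₂) / (4 + α₁ * α₂ - β₁ * β₂)) :
    let η₁ : ℝ → ℝ → ℝ := fun x y => α₁ * x + β₁ * y + γ₁
    let η₂ : ℝ → ℝ → ℝ := fun x y => α₂ * x + β₂ * y + γ₂
    let F : ℝ → ℝ → ℝ := fun x y => Real.exp (η₁ x y) + Real.exp (η₂ x y)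
    let G : ℝ → ℝ → ℝ := fun x y => 1 + A * Real.exp (η₁ x y + η₂ x y)
    (∀ x y, Dx2 F G x y - Dy2 F G x y - 4 * F x y * G x y = 0) ∧
    (∀ x y, (Dx2 F F x y + Dx2 G G x y) - (Dy2 F F x y + Dy2 G G x y) = 0) := by
  have hAD : A * (4 + α₁ * α₂ - β₁ * β₂) = -(4 - α₁ * α₂ + β₁ * β₂) := by
    rw [hA]; field_simp
  intro η₁ η₂ F G
  constructor
  · intro x y
    simp only [Dx2, Dy2, F, G, η₁, η₂]
    simp only [derivFx, derivFx2, derivFy, derivFy2,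
      derivGx, derivGx2, derivGy, derivGy2]
    simp only [Real.exp_add]
    set E1 : ℝ := Real.exp (α₁*x) * Real.exp (β₁*y) * Real.exp γ₁ with hE1
    set E2 : ℝ := Real.exp (α₂*x) * Real.exp (β₂*y) * Real.exp γ₂ with hE2
    linear_combination (E1*(1 + A*E1*E2) + A*E1*E2*(E2 - E1)) * h1
      + (E2*(1 + A*E1*E2) + A*E1*E2*(E1 - E2)) * h2
  · intro x y
    simp only [Dx2, Dy2, F, G, η₁, η₂]
    simp only [derivFx, derivFx2, derivFy, derivFy2,
      derivGx, derivGx2, derivGy, derivGy2]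
    simp only [Real.exp_add]
    set E1 : ℝ := Real.exp (α₁*x) * Real.exp (β₁*y) * Real.exp γ₁ with hE1
    set E2 : ℝ := Real.exp (α₂*x) * Real.exp (β₂*y) * Real.exp γ₂ with hE2
    linear_combination (2*E1*E2 + 2*A*E1*E2) * h1 + (2*E1*E2 + 2*A*E1*E2) * h2
      + 4*E1*E2*hAD
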